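/- Let $(C,D)$ be a MASA inclusion and suppose $E : C \to C$ is a conditional expectation onto $D$: a linear map with $E(x) \in D$ for all $x \in C$, $E(d) = d$ for all $d \in D$, $E$ positive (i.e., $E(x^*x) \geq 0$ for all $x$), and $E(d\,x\,e) = d\,E(x)\,e$ for all $d, e \in D$ and $x \in C$. Then for every character $\sigma$ of $D$, the functional $\rho := \sigma \circ E$ (i.e., $\rho(x) = \sigma(E(x))$) is a $D$-compatible state on $C$: $\rho$ is a state with $\rho|_D = \sigma$ and $|\rho(v)|^2 \in \{0, \rho(v^*v)\}$ for every normalizer $v \in N(C,D)$. -/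

import Mathlib

open scoped ComplexOrder

/-- `v` is a normalizer of the subset `S`:  `v* S v ⊆ S` and `v S v* ⊆ S`. -/
def IsNormalizer {C : Type*} [Mul C] [Star C] (S : Set C) (v : C) : Prop :=
  ∀ d ∈ S, star v * d * v ∈ S ∧ v * d * star v ∈ S

theorem masa_key {C : Type*} [NormedRing C] [StarRing C] [CStarRing C] [NormedAlgebra ℂ C]
    [CompleteSpace C] [StarModule ℂ C]
    (D : StarSubalgebra ℂ C)
    (hDcomm : ∀ a ∈ D, ∀ b ∈ D, a * b = b * a)
    (hmasa : ∀ x : C, (∀ d ∈ D, x * d = d * x) → x ∈ D)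
    (E : C → C) (hErange : ∀ x, E x ∈ D) (hEid : ∀ d ∈ D, E d = d)
    (hEbimod : ∀ d ∈ D, ∀ e ∈ D, ∀ x : C, E (d * x * e) = d * E x * e)
    (v : C) (hv : IsNormalizer (D : Set C) v) :
    E v * (star v * v) = (v * star v) * E v ∧ v * star (E v) = E v * star (E v) := by
  have h1D : (1 : C) ∈ D := one_mem D
  set a := E v with ha
  have haD : a ∈ D := hErange v
  have hsaD : star a ∈ D := star_mem haD
  have hhD : star v * v ∈ D := by simpa using (hv 1 h1D).1
  have hvvD : v * star v ∈ D := by simpa using (hv 1 h1D).2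
  -- key bimodule identity
  have keyq : ∀ e ∈ D, a * (star v * e * v) = (v * star v * e) * a := by
    intro e he
    have hqD : star v * e * v ∈ D := (hv e he).1
    have h1 : E (1 * v * (star v * e * v)) = 1 * E v * (star v * e * v) :=
      hEbimod 1 h1D _ hqD v
    have h2 : E ((v * star v * e) * v * 1) = (v * star v * e) * E v * 1 :=
      hEbimod _ (mul_mem hvvD he) 1 h1D v
    have h3 : (1 : C) * v * (star v * e * v) = (v * star v * e) * v * 1 := by
      noncomm_ring
    rw [h3] at h1
    rw [h1] at h2
    rw [← ha] at h2
    calc a * (star v * e * v) = 1 * a * (star v * e * v) := by rw [one_mul]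
      _ = (v * star v * e) * a * 1 := h2
      _ = (v * star v * e) * a := by rw [mul_one]
  have Id1 : a * (star v * v) = (v * star v) * a := by
    have := keyq 1 h1D
    simpa using this
  refine ⟨Id1, ?_⟩
  -- the key commutation-with-D lemma
  have hkeyT : ∀ e ∈ D, ∀ f : C,
      f * (star v * e * v) * (a * star a) = (f * e) * ((v * star v) * (a * star a)) := by
    intro e he f
    have hqD : star v * e * v ∈ D := (hv e he).1
    have h1 : (star v * e * v) * a = a * (star v * e * v) := hDcomm _ hqD _ haD
    have h2 : a * (star v * e * v) = (v * star v * e) * a := keyq e he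
    have h3 : (v * star v) * e = e * (v * star v) := hDcomm _ hvvD _ he
    calc f * (star v * e * v) * (a * star a)
        = f * ((star v * e * v) * a) * star a := by noncomm_ring
      _ = f * ((v * star v * e) * a) * star a := by rw [h1, h2]
      _ = f * ((v * star v) * e) * (a * star a) := by noncomm_ring
      _ = f * (e * (v * star v)) * (a * star a) := by rw [h3]
      _ = (f * e) * ((v * star v) * (a * star a)) := by noncomm_ring
  -- commutation of v * star a with D
  have hcomm_va : ∀ d ∈ D, v * d * star a = d * v * star a := by
    intro d hd
    have hsdD : star d ∈ D := star_mem hd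
    have t1D : star d * (star v * v) * d ∈ D := mul_mem (mul_mem hsdD hhD) hd
    have t2D : star d * (star v * d * v) ∈ D := mul_mem hsdD (hv d hd).1
    have t3D : (star v * star d * v) * d ∈ D := mul_mem (hv _ hsdD).1 hd
    have t4D : star v * (star d * d) * v ∈ D := (hv _ (mul_mem hsdD hd)).1
    have Texp : star (v * d - d * v) * (v * d - d * v)
        = star d * (star v * v) * d - star d * (star v * d * v)
          - (star v * star d * v) * d + star v * (star d * d) * v := by
      simp only [star_sub, star_mul]
      noncomm_ring
    have hgD : star (v * d - d * v) * (v * d - d * v) ∈ D := by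
      rw [Texp]; exact add_mem (sub_mem (sub_mem t1D t2D) t3D) t4D
    have hW1 : star d * (star v * v) * d * (a * star a)
        = (star d * d) * ((v * star v) * (a * star a)) := by
      have hc : (star v * v) * d = d * (star v * v) := hDcomm _ hhD _ hd
      have A1 : star d * (star v * v) * d = (star d * d) * (star v * 1 * v) := by
        calc star d * (star v * v) * d = star d * ((star v * v) * d) := by rw [mul_assoc]
          _ = star d * (d * (star v * v)) := by rw [hc]
          _ = (star d * d) * (star v * 1 * v) := by noncomm_ring
      rw [A1, hkeyT 1 h1D (star d * d), mul_one]
    have hW2 : star d * (star v * d * v) * (a * star a)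
        = (star d * d) * ((v * star v) * (a * star a)) := hkeyT d hd (star d)
    have hW3 : (star v * star d * v) * d * (a * star a)
        = (star d * d) * ((v * star v) * (a * star a)) := by
      have A3 : (star v * star d * v) * d = d * (star v * star d * v) :=
        hDcomm _ (hv _ hsdD).1 _ hd
      have A4 : d * star d = star d * d := hDcomm _ hd _ hsdD
      rw [A3, hkeyT (star d) hsdD d, A4]
    have hW4 : star v * (star d * d) * v * (a * star a)
        = (star d * d) * ((v * star v) * (a * star a)) := by
      have := hkeyT (star d * d) (mul_mem hsdD hd) 1
      rw [one_mul, one_mul] at this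
      exact this
    have G0 : (star (v * d - d * v) * (v * d - d * v)) * (a * star a) = 0 := by
      rw [Texp, add_mul, sub_mul, sub_mul, hW1, hW2, hW3, hW4]
      abel
    have hstep : a * star (v * d - d * v) * ((v * d - d * v) * star a)
        = (star (v * d - d * v) * (v * d - d * v)) * (a * star a) := by
      have hcg : a * (star (v * d - d * v) * (v * d - d * v))
          = (star (v * d - d * v) * (v * d - d * v)) * a := hDcomm _ haD _ hgD
      calc a * star (v * d - d * v) * ((v * d - d * v) * star a)
          = a * (star (v * d - d * v) * (v * d - d * v)) * star a := by noncomm_ring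
        _ = (star (v * d - d * v) * (v * d - d * v)) * a * star a := by rw [hcg]
        _ = (star (v * d - d * v) * (v * d - d * v)) * (a * star a) := by rw [mul_assoc]
    have hm0 : star ((v * d - d * v) * star a) * ((v * d - d * v) * star a) = 0 := by
      have hsm : star ((v * d - d * v) * star a) = a * star (v * d - d * v) := by
        rw [star_mul, star_star]
      rw [hsm, hstep, G0]
    have hm : (v * d - d * v) * star a = 0 :=
      (CStarRing.star_mul_self_eq_zero_iff _).mp hm0
    rw [sub_mul] at hm
    exact sub_eq_zero.mp hm
  have hvsaD : v * star a ∈ D := by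
    apply hmasa
    intro d hd
    have h2 : star a * d = d * star a := hDcomm _ hsaD _ hd
    calc v * star a * d = v * (star a * d) := by rw [mul_assoc]
      _ = v * (d * star a) := by rw [h2]
      _ = v * d * star a := by rw [mul_assoc]
      _ = d * v * star a := hcomm_va d hd
      _ = d * (v * star a) := by rw [mul_assoc]
  have hE2 : E (1 * v * star a) = 1 * E v * star a := hEbimod 1 h1D (star a) hsaD v
  simp only [one_mul] at hE2
  have hE3 : E (v * star a) = v * star a := hEid _ hvsaD
  rw [hE3, ← ha] at hE2
  exact hE2

/-- Let `(C,D)` be a MASA inclusion with a conditional expectation `E : C → D`.  Then for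
every character `σ` of `D`, the functional `ρ = σ ∘ E` is a `D`-compatible state on `C`:
it is linear, unital, positive, restricts to `σ` on `D`, and satisfies
`|ρ(v)|² ∈ {0, ρ(v*v)}` for every normalizer `v ∈ N(C,D)`. -/
theorem expectation_gives_compatible_state
    {C : Type*} [NormedRing C] [StarRing C] [CStarRing C] [NormedAlgebra ℂ C]
    [CompleteSpace C] [StarModule ℂ C]
    (D : StarSubalgebra ℂ C) (hDclosed : IsClosed (D : Set C))
    (hDcomm : ∀ a ∈ D, ∀ b ∈ D, a * b = b * a)
    -- `D` is a MASA in `C`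
    (hmasa : ∀ x : C, (∀ d ∈ D, x * d = d * x) → x ∈ D)
    -- `E` is a conditional expectation of `C` onto `D`
    (E : C →ₗ[ℂ] C)
    (hErange : ∀ x : C, E x ∈ D)
    (hEid : ∀ d ∈ D, E d = d)
    (hEpos : ∀ x : C, ∃ y : C, E (star x * x) = star y * y)
    (hEbimod : ∀ d ∈ D, ∀ e ∈ D, ∀ x : C, E (d * x * e) = d * E x * e)
    -- `σ` is a character of `D` (encoded as a function on `C`, constrained only on `D`)
    (σ : C → ℂ)
    (hσadd : ∀ a ∈ D, ∀ b ∈ D, σ (a + b) = σ a + σ b)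
    (hσsmul : ∀ (c : ℂ), ∀ a ∈ D, σ (c • a) = c * σ a)
    (hσmul : ∀ a ∈ D, ∀ b ∈ D, σ (a * b) = σ a * σ b)
    (hσ1 : σ 1 = 1) :
    -- `ρ := σ ∘ E` is a `D`-compatible state extending `σ`
    σ (E 1) = 1 ∧
    (∀ x : C, 0 ≤ σ (E (star x * x))) ∧
    (∀ x y : C, σ (E (x + y)) = σ (E x) + σ (E y)) ∧
    (∀ (c : ℂ) (x : C), σ (E (c • x)) = c * σ (E x)) ∧
    (∀ d ∈ D, σ (E d) = σ d) ∧
    (∀ v : C, IsNormalizer (D : Set C) v →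
      (((‖σ (E v)‖ : ℝ) : ℂ) ^ 2 = 0 ∨
        ((‖σ (E v)‖ : ℝ) : ℂ) ^ 2 = σ (E (star v * v)))) := by
  
  have h1D : (1 : C) ∈ D := one_mem D
  have hE1 : E 1 = 1 := hEid 1 h1D
  have hσ0 : σ (0 : C) = 0 := by
    have := hσsmul 0 0 (zero_mem D)
    simpa using this
  haveI : IsClosed ((D : Set C)) := hDclosed
  haveI : CompleteSpace D := hDclosed.completeSpace_coe
  letI : CStarAlgebra C :=
    { ‹NormedRing C›, ‹StarRing C›, ‹CompleteSpace C›, ‹CStarRing C›,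
      ‹NormedAlgebra ℂ C›, ‹StarModule ℂ C› with }
  letI : CStarAlgebra D :=
    { (inferInstance : NormedRing D), (inferInstance : StarRing D),
      (inferInstance : CompleteSpace D), (inferInstance : CStarRing D),
      (inferInstance : NormedAlgebra ℂ D), (inferInstance : StarModule ℂ D) with }
  -- the character as an algebra homomorphism on D
  let φ : D →ₐ[ℂ] ℂ :=
    { toFun := fun e => σ e
      map_one' := by simpa using hσ1
      map_mul' := fun e f => by
        have := hσmul e e.2 f f.2
        simpa using this
      map_zero' := by simpa using hσ0
      map_add' := fun e f => by
        have := hσadd e e.2 f f.2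
        simpa using this
      commutes' := fun c => by
        have h2 : σ (algebraMap ℂ C c) = c := by
          rw [Algebra.algebraMap_eq_smul_one, hσsmul c 1 h1D, hσ1, mul_one]
        simpa using h2 }
  have hφ : ∀ (x : C) (hx : x ∈ D), φ ⟨x, hx⟩ = σ x := fun _ _ => rfl
  have hspec : ∀ (x : C) (hx : x ∈ D), σ x ∈ spectrum ℂ x := by
    intro x hx
    have h1 := AlgHom.apply_mem_spectrum φ (⟨x, hx⟩ : D)
    rw [StarSubalgebra.spectrum_eq] at h1
    simpa [hφ] using h1
  -- σ is star-preserving on D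
  haveI hSH : StarHomClass (D →ₐ[ℂ] ℂ) D ℂ := AlgHomClass.instStarHomClass
  have hstarD : ∀ x ∈ D, σ (star x) = (starRingEnd ℂ) (σ x) := by
    intro x hx
    have h1 := map_star φ (⟨x, hx⟩ : D)
    have h2 : (star (⟨x, hx⟩ : D)) = (⟨star x, star_mem hx⟩ : D) := rfl
    rw [h2, hφ, hφ] at h1
    simpa using h1
  refine ⟨by rw [hE1]; exact hσ1, ?_, ?_, ?_, ?_, ?_⟩
  · -- positivity
    intro x
    obtain ⟨y, hy⟩ := hEpos x
    have hyD : star y * y ∈ D := hy ▸ hErange _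
    have hsp := hspec _ hyD
    have hsa' : IsSelfAdjoint (star y * y) := IsSelfAdjoint.star_mul_self y
    have hre : σ (star y * y) = ((σ (star y * y)).re : ℂ) := hsa'.mem_spectrum_eq_re hsp
    have hmem : ((σ (star y * y)).re : ℂ) ∈ spectrum ℂ (star y * y) := hre ▸ hsp
    have hmemR : (σ (star y * y)).re ∈ spectrum ℝ (star y * y) := by
      apply spectrum.of_algebraMap_mem ℂ
      simpa using hmem
    have hge : 0 ≤ (σ (star y * y)).re := spectrum_star_mul_self_nonneg _ hmemR
    rw [hy, hre]
    exact_mod_cast hge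
  · intro x y
    rw [map_add]
    exact hσadd _ (hErange x) _ (hErange y)
  · intro c x
    rw [map_smul]
    exact hσsmul c _ (hErange x)
  · intro d hd
    rw [hEid d hd]
  · -- compatibility
    intro v hv
    have haD : E v ∈ D := hErange v
    have hsaD : star (E v) ∈ D := star_mem haD
    have hhD : star v * v ∈ D := by simpa using (hv 1 h1D).1
    have hvvD : v * star v ∈ D := by simpa using (hv 1 h1D).2
    have hkD : E v * star (E v) ∈ D := mul_mem haD hsaD
    obtain ⟨Id1, hva⟩ := masa_key D hDcomm hmasa (fun x => E x) hErange hEid hEbimod v hv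
    -- |σ (E v)|² = σ (E v * star (E v))
    have habs : ((‖σ (E v)‖ : ℝ) : ℂ) ^ 2 = σ (E v * star (E v)) := by
      rw [hσmul _ haD _ hsaD, hstarD _ haD, Complex.mul_conj]
      norm_cast
      exact Complex.sq_norm _
    -- operator identity k² = (v v*) k
    have c3 : (E v * star (E v)) * (E v * star (E v))
        = (v * star v) * (E v * star (E v)) := by
      calc (E v * star (E v)) * (E v * star (E v))
          = star (E v * star (E v)) * (E v * star (E v)) := by rw [star_mul, star_star]
        _ = star (v * star (E v)) * (v * star (E v)) := by rw [hva]
        _ = E v * (star v * v) * star (E v) := by rw [star_mul, star_star]; noncomm_ring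
        _ = (v * star v) * E v * star (E v) := by rw [Id1]
        _ = (v * star v) * (E v * star (E v)) := by rw [mul_assoc]
    have hk2 : σ (E v * star (E v)) * σ (E v * star (E v))
        = σ (v * star v) * σ (E v * star (E v)) := by
      have := congrArg σ c3
      rwa [hσmul _ hkD _ hkD, hσmul _ hvvD _ hkD] at this
    by_cases hz : σ (E v * star (E v)) = 0
    · left
      rw [habs, hz]
    · right
      have hs : σ (E v) ≠ 0 := by
        intro h
        apply hz
        rw [hσmul _ haD _ hsaD, h, zero_mul]
      have h1 : σ (E v * star (E v)) = σ (v * star v) := mul_right_cancel₀ hz hk2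
      have h2 : σ (E v) * σ (star v * v) = σ (v * star v) * σ (E v) := by
        have := congrArg σ Id1
        rwa [hσmul _ haD _ hhD, hσmul _ hvvD _ haD] at this
      have h3 : σ (star v * v) = σ (v * star v) :=
        mul_left_cancel₀ hs (h2.trans (mul_comm _ _))
      rw [hEid _ hhD, habs, h1, h3]
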